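/- Let f(ε) be the energy of the truncated axially symmetric critical surface, with second derivative at ε = 0 given by f''(0) = 4πr(βκ_g² − 2bc_o²κ_g) when the boundary circle has radius r = √(α/β). Using the boundary relation |r'(L)| = √(1 − 4a²c_o²α/((a+b)²β)) and κ_g = −r'/r, show: if α > β³(a+b)²/(4c_o²(b²(a+b)²c_o² + a²β²)) and bκ_g > 0 along the boundary, then f''(0) < 0 (instability). -/

import Mathlib

/-- With boundary radius r = √(α/β), |r'(L)| = √(1 − 4a²c_o²α/((a+b)²β))
and κ_g = −r'/r, if α > β³(a+b)²/(4c_o²(b²(a+b)²c_o² + a²β²)) and bκ_g > 0 along the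
boundary, then f''(0) has the sign of βκ_g² − 2bc_o²κ_g < 0, i.e. the surface is
unstable. -/
theorem stmt_10 (a b c_o α β r r' κg : ℝ)
    (ha : 0 < a) (hα : 0 < α) (hβ : 0 < β) (hc : c_o ≠ 0)
    (hle : 4 * a ^ 2 * c_o ^ 2 * α ≤ (a + b) ^ 2 * β)
    (hr : r = Real.sqrt (α / β))
    (hr' : |r'| = Real.sqrt (1 - 4 * a ^ 2 * c_o ^ 2 * α / ((a + b) ^ 2 * β)))
    (hκ : κg = -r' / r)
    (hαbig : α > β ^ 3 * (a + b) ^ 2 /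
        (4 * c_o ^ 2 * (b ^ 2 * (a + b) ^ 2 * c_o ^ 2 + a ^ 2 * β ^ 2)))
    (hbκ : b * κg > 0) :
    β * κg ^ 2 - 2 * b * c_o ^ 2 * κg < 0 := by
  have hc2 : 0 < c_o ^ 2 := by positivity
  -- a + b ≠ 0
  have hab : (a + b) ^ 2 > 0 := by
    rcases eq_or_ne (a + b) 0 with h | h
    · rw [h] at hle
      norm_num at hle
      nlinarith [mul_pos (mul_pos (mul_pos ha ha) hc2) hα]
    · positivity
  -- r^2 = α/β
  have hrpos : 0 < r := by
    rw [hr]; exact Real.sqrt_pos.mpr (by positivity)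
  have hr2 : r ^ 2 = α / β := by
    rw [hr, Real.sq_sqrt (by positivity)]
  -- r'^2 = 1 - T
  have hTnn : 0 ≤ 1 - 4 * a ^ 2 * c_o ^ 2 * α / ((a + b) ^ 2 * β) := by
    rw [sub_nonneg, div_le_one (by positivity)]
    exact hle
  have hr'2 : r' ^ 2 = 1 - 4 * a ^ 2 * c_o ^ 2 * α / ((a + b) ^ 2 * β) := by
    have := congrArg (· ^ 2) hr'
    simpa [sq_abs, Real.sq_sqrt hTnn] using this
  -- κg^2 in terms of data
  have hκ2 : α * κg ^ 2 = β * r' ^ 2 := by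
    have : κg ^ 2 = r' ^ 2 / r ^ 2 := by rw [hκ]; ring
    rw [this, hr2]
    field_simp
  have hkey : (a + b) ^ 2 * α * β * κg ^ 2 = (a + b) ^ 2 * β ^ 2 - 4 * a ^ 2 * c_o ^ 2 * α * β := by
    have h1 : (a + b) ^ 2 * β * r' ^ 2 = (a + b) ^ 2 * β - 4 * a ^ 2 * c_o ^ 2 * α := by
      rw [hr'2]; field_simp
      rw [mul_sub, mul_div_cancel₀ _ hab.ne']
    linear_combination (a + b) ^ 2 * β * hκ2 + β * h1
  -- hαbig cleared of denominators
  have hden : 0 < 4 * c_o ^ 2 * (b ^ 2 * (a + b) ^ 2 * c_o ^ 2 + a ^ 2 * β ^ 2) := by positivity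
  have hαbig' : β ^ 3 * (a + b) ^ 2 <
      α * (4 * c_o ^ 2 * (b ^ 2 * (a + b) ^ 2 * c_o ^ 2 + a ^ 2 * β ^ 2)) := by
    have := (div_lt_iff₀ hden).mp hαbig
    linarith
  -- β² κg² < 4 b² c_o⁴
  have hsq : β ^ 2 * κg ^ 2 < 4 * b ^ 2 * c_o ^ 4 := by
    have h2 : (a + b) ^ 2 * α * (β ^ 2 * κg ^ 2) < (a + b) ^ 2 * α * (4 * b ^ 2 * c_o ^ 4) := by
      nlinarith [hkey, hαbig']
    have hpos : 0 < (a + b) ^ 2 * α := by positivity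
    exact lt_of_mul_lt_mul_left h2 hpos.le
  -- conclude
  have hb : b ≠ 0 := by rintro rfl; simp at hbκ
  have hb2 : 0 < b ^ 2 := by positivity
  have h3 : (β * (b * κg)) ^ 2 < (2 * b ^ 2 * c_o ^ 2) ^ 2 := by nlinarith [mul_lt_mul_of_pos_left hsq hb2]
  have h4 : β * (b * κg) < 2 * b ^ 2 * c_o ^ 2 :=
    lt_of_pow_lt_pow_left₀ 2 (by positivity) h3
  have h5 := mul_lt_mul_of_pos_right h4 hbκ
  have h6 : b ^ 2 * (β * κg ^ 2 - 2 * b * c_o ^ 2 * κg) < 0 := by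
    have e : b ^ 2 * (β * κg ^ 2 - 2 * b * c_o ^ 2 * κg)
        = β * (b * κg) * (b * κg) - 2 * b ^ 2 * c_o ^ 2 * (b * κg) := by ring
    rw [e]; linarith [h5]
  by_contra hcon
  push_neg at hcon
  linarith [mul_nonneg hb2.le hcon]
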